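/- Let n ≥ 3 and let x_1,…,x_n be strictly positive real numbers. Define f(y) = −2y + ∑_{k=1}^n x_k / (y + √(y² − x_k)). Then f is strictly decreasing on the interval [√(max_k x_k), ∞); in particular, f has at most one zero in this interval (if f(r) = f(r') = 0 with r, r' ≥ √(max_k x_k), then r = r'). -/

import Mathlib

/-- For positive reals `x 1, …, x n` (`n ≥ 3`), the function
`f y = -2 y + ∑_{k=1}^n x k / (y + √(y² - x k))` is strictly decreasing on
`[√(max_k x k), ∞)`; in particular it has at most one zero in that interval. -/
theorem f_strictAnti_and_unique_zero (n : ℕ) (hn : 3 ≤ n) (x : ℕ → ℝ)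
    (hx : ∀ k ∈ Finset.Icc 1 n, 0 < x k)
    (f : ℝ → ℝ)
    (hf : ∀ y, f y = -2 * y + ∑ k ∈ Finset.Icc 1 n, x k / (y + Real.sqrt (y ^ 2 - x k)))
    (M : ℝ) (hM : M = (Finset.Icc 1 n).sup' (Finset.nonempty_Icc.mpr (by omega)) x) :
    StrictAntiOn f (Set.Ici (Real.sqrt M)) ∧
      ∀ r ∈ Set.Ici (Real.sqrt M), ∀ r' ∈ Set.Ici (Real.sqrt M),
        f r = 0 → f r' = 0 → r = r' := by
  have h1mem : (1 : ℕ) ∈ Finset.Icc 1 n := by simp [Finset.mem_Icc]; omega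
  have hM0 : 0 < M := by
    have h1 : x 1 ≤ M := hM ▸ Finset.le_sup' x h1mem
    exact lt_of_lt_of_le (hx 1 h1mem) h1
  have key : StrictAntiOn f (Set.Ici (Real.sqrt M)) := by
    intro a ha b hb hab
    simp only [Set.mem_Ici] at ha hb
    have hM0' : 0 < Real.sqrt M := Real.sqrt_pos.mpr hM0
    have ha0 : 0 < a := lt_of_lt_of_le hM0' ha
    have hsum : ∀ k ∈ Finset.Icc 1 n,
        x k / (b + Real.sqrt (b ^ 2 - x k)) ≤ x k / (a + Real.sqrt (a ^ 2 - x k)) := by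
      intro k hk
      have hxk := hx k hk
      have hda : 0 < a + Real.sqrt (a ^ 2 - x k) :=
        add_pos_of_pos_of_nonneg ha0 (Real.sqrt_nonneg _)
      have hle : a + Real.sqrt (a ^ 2 - x k) ≤ b + Real.sqrt (b ^ 2 - x k) := by
        have h2 : a ^ 2 - x k ≤ b ^ 2 - x k := by nlinarith
        exact add_le_add hab.le (Real.sqrt_le_sqrt h2)
      gcongr
    calc f b = -2 * b + ∑ k ∈ Finset.Icc 1 n, x k / (b + Real.sqrt (b ^ 2 - x k)) := hf b
      _ ≤ -2 * b + ∑ k ∈ Finset.Icc 1 n, x k / (a + Real.sqrt (a ^ 2 - x k)) := by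
          exact add_le_add_right (Finset.sum_le_sum hsum) _
      _ < -2 * a + ∑ k ∈ Finset.Icc 1 n, x k / (a + Real.sqrt (a ^ 2 - x k)) := by linarith
      _ = f a := (hf a).symm
  exact ⟨key, fun r hr r' hr' h h' => key.injOn hr hr' (h.trans h'.symm)⟩
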